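/- In a cons-free ATRS, let Y be the set of constructor symbols whose type has order greater than 1, F' = F \ Y, and R' the rules of R not mentioning any symbol of Y. Then (a) all data terms and all B-safe terms lie in T(F', ∅); (b) if s is a basic term and s →*_R t, then t ∈ T(F', ∅) and s →*_{R'} t. -/
import Mathlib


/-! # Applicative term rewriting systems (ATRSs) -/

/-- Simple types over a countable set of sorts. -/
inductive Ty where
  | base : ℕ → Ty
  | arrow : Ty → Ty → Ty

/-- Type order: sorts have order 0, `σ ⇒ τ` has order `max (order σ + 1) (order τ)`. -/
def Ty.order : Ty → ℕ
  | .base _ => 0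
  | .arrow σ τ => max (σ.order + 1) τ.order

/-- Applicative terms over a set `α` of function symbols, with variables `ℕ`. -/
inductive Tm (α : Type) where
  | sym : α → Tm α
  | var : ℕ → Tm α
  | app : Tm α → Tm α → Tm α

mutual
  /-- Strict subterm: `t` is a strict subterm of `s₁ s₂` if it is a strict
  subterm of `s₁` or a subterm of `s₂` (heads of applications are not subterms). -/
  inductive StrSubtm {α : Type} : Tm α → Tm α → Prop where
    | left {t s u : Tm α} : StrSubtm t s → StrSubtm t (Tm.app s u)
    | right {t s u : Tm α} : Subtm t u → StrSubtm t (Tm.app s u)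
  /-- Subterm: `t ⊴ s` iff `t = s` or `t` is a strict subterm of `s`. -/
  inductive Subtm {α : Type} : Tm α → Tm α → Prop where
    | refl (s : Tm α) : Subtm s s
    | strict {t s : Tm α} : StrSubtm t s → Subtm t s
end

/-- A signature: which symbols are constructors, their types, and variable types. -/
structure Sig (α : Type) where
  Cons : α → Prop
  typeOf : α → Ty
  varTy : ℕ → Ty

/-- Typing judgement for applicative terms. -/
inductive HasTy {α : Type} (S : Sig α) : Tm α → Ty → Prop where
  | sym (f : α) : HasTy S (.sym f) (S.typeOf f)
  | var (x : ℕ) : HasTy S (.var x) (S.varTy x)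
  | app {s t : Tm α} {σ τ : Ty} :
      HasTy S s (.arrow σ τ) → HasTy S t σ → HasTy S (.app s t) τ

mutual
  /-- Patterns: a variable, or a constructor fully applied (to base type) to patterns. -/
  inductive Pat {α : Type} (S : Sig α) : Tm α → Prop where
    | var (x : ℕ) : Pat S (.var x)
    | cons {s : Tm α} : PatSpine S s → (∃ i, HasTy S s (.base i)) → Pat S s
  /-- A constructor applied to a (possibly incomplete) list of patterns. -/
  inductive PatSpine {α : Type} (S : Sig α) : Tm α → Prop where
    | head {f : α} : S.Cons f → PatSpine S (.sym f)
    | app {s t : Tm α} : PatSpine S s → Pat S t → PatSpine S (.app s t)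
end

/-- Ground terms: terms without variables. -/
def Tm.ground {α : Type} : Tm α → Prop
  | .sym _ => True
  | .var _ => False
  | .app s t => s.ground ∧ t.ground

/-- Data terms: ground patterns. -/
def IsData {α : Type} (S : Sig α) (s : Tm α) : Prop := Pat S s ∧ s.ground

/-- The set of variables of a term. -/
def Tm.vars {α : Type} : Tm α → Set ℕ
  | .sym _ => ∅
  | .var x => {x}
  | .app s t => s.vars ∪ t.vars

/-- Number of occurrences of variable `x` in a term. -/
def Tm.count {α : Type} (x : ℕ) : Tm α → ℕ
  | .sym _ => 0
  | .var y => if y = x then 1 else 0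
  | .app s t => Tm.count x s + Tm.count x t

/-- Applying a substitution to a term. -/
def subst {α : Type} (γ : ℕ → Tm α) : Tm α → Tm α
  | .sym f => .sym f
  | .var x => γ x
  | .app s t => .app (subst γ s) (subst γ t)

/-- A rewrite rule. -/
structure Rule (α : Type) where
  lhs : Tm α
  rhs : Tm α

/-- Left-hand side shape of a constructor rule:
a defined symbol applied to patterns. -/
inductive LhsSpine {α : Type} (S : Sig α) : Tm α → Prop where
  | head {f : α} : ¬ S.Cons f → LhsSpine S (.sym f)
  | app {s t : Tm α} : LhsSpine S s → Pat S t → LhsSpine S (.app s t)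

/-- The head symbol of a term, if any. -/
def Tm.headSym {α : Type} : Tm α → Option α
  | .sym f => some f
  | .var _ => none
  | .app s _ => s.headSym

/-- `t` has the form `c t₁ ⋯ t_m` with `c` a constructor. -/
def ConsHead {α : Type} (S : Sig α) (t : Tm α) : Prop :=
  ∃ f, t.headSym = some f ∧ S.Cons f

/-- A rule is cons-free if every constructor-headed subterm of the right-hand side
is a data term or a (strict) subterm of the left-hand side. -/
def ConsFreeRule {α : Type} (S : Sig α) (ρ : Rule α) : Prop :=
  ∀ t, Subtm t ρ.rhs → ConsHead S t → (IsData S t ∨ StrSubtm t ρ.lhs)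

/-- A left-linear cons-free constructor rule (with well-typed sides of equal type,
and variables of the right-hand side occurring on the left). -/
def GoodRule {α : Type} (S : Sig α) (ρ : Rule α) : Prop :=
  LhsSpine S ρ.lhs ∧
  (∀ x, Tm.count x ρ.lhs ≤ 1) ∧
  ρ.rhs.vars ⊆ ρ.lhs.vars ∧
  (∃ σ, HasTy S ρ.lhs σ ∧ HasTy S ρ.rhs σ) ∧
  ConsFreeRule S ρ

/-- One-step rewriting: closure of rule instances under application contexts. -/
inductive Rew {α : Type} (R : Set (Rule α)) : Tm α → Tm α → Prop where
  | root {ρ : Rule α} {γ : ℕ → Tm α} :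
      ρ ∈ R → Rew R (subst γ ρ.lhs) (subst γ ρ.rhs)
  | appL {s s' t : Tm α} : Rew R s s' → Rew R (.app s t) (.app s' t)
  | appR {s t t' : Tm α} : Rew R t t' → Rew R (.app s t) (.app s t')

/-- `s` is `B`-safe: every constructor-headed subterm of `s` lies in `B`. -/
def BSafe {α : Type} (S : Sig α) (B : Set (Tm α)) (s : Tm α) : Prop :=
  ∀ t, Subtm t s → ConsHead S t → t ∈ B

/-- `B` is a suitable set of data terms: it consists of data terms, is closed
under subterms, and contains all data subterms of right-hand sides of rules. -/
def GoodB {α : Type} (S : Sig α) (R : Set (Rule α)) (B : Set (Tm α)) : Prop :=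
  (∀ t ∈ B, IsData S t) ∧
  (∀ t ∈ B, ∀ u, Subtm u t → u ∈ B) ∧
  (∀ ρ ∈ R, ∀ t, Subtm t ρ.rhs → IsData S t → t ∈ B)

/-- Spine of a basic term: a defined symbol applied to data terms. -/
inductive BasicSpine {α : Type} (S : Sig α) : Tm α → Prop where
  | head {f : α} : ¬ S.Cons f → BasicSpine S (.sym f)
  | app {s t : Tm α} : BasicSpine S s → IsData S t → BasicSpine S (.app s t)

/-- Basic terms: a defined symbol applied to data terms, of base type. -/
def Basic {α : Type} (S : Sig α) (s : Tm α) : Prop :=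
  BasicSpine S s ∧ ∃ i, HasTy S s (.base i)

/-- The set `B_s`: data terms occurring in `s` or in a right-hand side of a rule. -/
def Bset {α : Type} (S : Sig α) (R : Set (Rule α)) (s : Tm α) : Set (Tm α) :=
  { t | IsData S t ∧ (Subtm t s ∨ ∃ ρ ∈ R, Subtm t ρ.rhs) }

/-- A symbol occurs (possibly as head) in a term. -/
def Tm.hasSym {α : Type} (f : α) : Tm α → Prop
  | .sym g => g = f
  | .var _ => False
  | .app s t => Tm.hasSym f s ∨ Tm.hasSym f t

/-- `f ∈ Y`: a constructor whose type has order greater than 1. -/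
def InY {α : Type} (S : Sig α) (f : α) : Prop :=
  S.Cons f ∧ 1 < (S.typeOf f).order

/-- A term over the restricted signature `F' = F \ Y`. -/
def YFree {α : Type} (S : Sig α) (s : Tm α) : Prop :=
  ∀ f, Tm.hasSym f s → ¬ InY S f

/-- The restricted rule set `R'`: rules mentioning no symbol of `Y` on either side. -/
def Rprime {α : Type} (S : Sig α) (R : Set (Rule α)) : Set (Rule α) :=
  { ρ ∈ R | YFree S ρ.lhs ∧ YFree S ρ.rhs }

section Aux
variable {α : Type}

theorem str_size : ∀ {s t : Tm α}, StrSubtm t s → sizeOf t < sizeOf s := by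
  intro s
  induction s with
  | sym f => intro t h; cases h
  | var x => intro t h; cases h
  | app a b iha ihb =>
    intro t h
    cases h with
    | left h => have := iha h; simp only [Tm.app.sizeOf_spec]; omega
    | right h =>
      cases h with
      | refl => simp only [Tm.app.sizeOf_spec]; omega
      | strict h => have := ihb h; simp only [Tm.app.sizeOf_spec]; omega

theorem sub_size {s t : Tm α} (h : Subtm t s) : sizeOf t ≤ sizeOf s := by
  cases h with
  | refl => exact le_refl _
  | strict h => exact le_of_lt (str_size h)

theorem strsub_irrefl {s : Tm α} (h : StrSubtm s s) : False :=
  absurd (str_size h) (lt_irrefl _)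

theorem sub_trans_aux : ∀ c : Tm α,
    (∀ a b : Tm α, Subtm a b → Subtm b c → Subtm a c) ∧
    (∀ a b : Tm α, Subtm a b → StrSubtm b c → StrSubtm a c) := by
  intro c
  induction c with
  | sym f =>
    refine ⟨?_, ?_⟩
    · intro a b hab hbc; cases hbc with
      | refl => exact hab
      | strict h => cases h
    · intro a b hab hbc; cases hbc
  | var x =>
    refine ⟨?_, ?_⟩
    · intro a b hab hbc; cases hbc with
      | refl => exact hab
      | strict h => cases h
    · intro a b hab hbc; cases hbc
  | app u v ihu ihv =>
    have S : ∀ a b : Tm α, Subtm a b → StrSubtm b (.app u v) → StrSubtm a (.app u v) := by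
      intro a b hab hbc
      cases hbc with
      | left h => exact .left (ihu.2 a b hab h)
      | right h => exact .right (ihv.1 a b hab h)
    refine ⟨?_, S⟩
    intro a b hab hbc
    cases hbc with
    | refl => exact hab
    | strict h => exact .strict (S a b hab h)

theorem sub_trans {a b c : Tm α} (h1 : Subtm a b) (h2 : Subtm b c) : Subtm a c :=
  (sub_trans_aux c).1 a b h1 h2

theorem sub_str_trans {a b c : Tm α} (h1 : Subtm a b) (h2 : StrSubtm b c) : StrSubtm a c :=
  (sub_trans_aux c).2 a b h1 h2

theorem hasTy_unique {S : Sig α} : ∀ {s : Tm α} {σ τ : Ty},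
    HasTy S s σ → HasTy S s τ → σ = τ := by
  intro s
  induction s with
  | sym f => intro σ τ h1 h2; cases h1; cases h2; rfl
  | var x => intro σ τ h1 h2; cases h1; cases h2; rfl
  | app a b iha ihb =>
    intro σ τ h1 h2
    cases h1 with
    | app ha1 hb1 =>
      cases h2 with
      | app ha2 hb2 => cases iha ha1 ha2; rfl

theorem ground_subst {γ : ℕ → Tm α} : ∀ {r : Tm α}, r.ground → subst γ r = r := by
  intro r
  induction r with
  | sym f => intro _; rfl
  | var x => intro h; exact absurd h not_false
  | app a b iha ihb => intro h; simp [subst, iha h.1, ihb h.2]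

theorem subst_ground {γ : ℕ → Tm α} : ∀ {l : Tm α}, (subst γ l).ground →
    ∀ x ∈ l.vars, (γ x).ground := by
  intro l
  induction l with
  | sym f => intro _ x hx; exact absurd hx (Set.notMem_empty x)
  | var y => intro h x hx; cases hx; exact h
  | app a b iha ihb =>
    intro h x hx
    cases hx with
    | inl hx => exact iha h.1 x hx
    | inr hx => exact ihb h.2 x hx

theorem ground_subst_of {γ : ℕ → Tm α} : ∀ {r : Tm α},
    (∀ x ∈ r.vars, (γ x).ground) → (subst γ r).ground := by
  intro r
  induction r with
  | sym f => intro _; trivial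
  | var x => intro h; exact h x rfl
  | app a b iha ihb =>
    intro h
    exact ⟨iha fun x hx => h x (Or.inl hx), ihb fun x hx => h x (Or.inr hx)⟩

end Aux
section Aux2
variable {α : Type}

theorem headSym_subst {γ : ℕ → Tm α} : ∀ {l : Tm α} {f : α}, l.headSym = some f →
    (subst γ l).headSym = some f := by
  intro l
  induction l with
  | sym g => intro f h; exact h
  | var x => intro f h; cases h
  | app a b iha ihb => intro f h; exact iha h

theorem hasSym_subst {γ : ℕ → Tm α} {f : α} : ∀ {l : Tm α}, Tm.hasSym f l →
    Tm.hasSym f (subst γ l) := by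
  intro l
  induction l with
  | sym g => intro h; exact h
  | var x => intro h; cases h
  | app a b iha ihb =>
    intro h
    cases h with
    | inl h => exact Or.inl (iha h)
    | inr h => exact Or.inr (ihb h)

theorem headSym_hasSym : ∀ {s : Tm α} {f : α}, s.headSym = some f → Tm.hasSym f s := by
  intro s
  induction s with
  | sym g => intro f h; exact (Option.some.inj h)
  | var x => intro f h; cases h
  | app a b iha ihb => intro f h; exact Or.inl (iha h)

theorem hasSym_sub_mono {f : α} : ∀ {s t : Tm α}, Subtm t s → Tm.hasSym f t →
    Tm.hasSym f s := by
  intro s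
  induction s with
  | sym g =>
    intro t h hf
    cases h with
    | refl => exact hf
    | strict h => cases h
  | var x =>
    intro t h hf
    cases h with
    | refl => exact hf
    | strict h => cases h
  | app a b iha ihb =>
    intro t h hf
    cases h with
    | refl => exact hf
    | strict h =>
      cases h with
      | left h => exact Or.inl (iha (.strict h) hf)
      | right h => exact Or.inr (ihb h hf)

theorem hasSym_head_sub {f : α} : ∀ {s : Tm α}, Tm.hasSym f s →
    ∃ t, Subtm t s ∧ t.headSym = some f := by
  intro s
  induction s with
  | sym g => intro h; exact ⟨.sym g, .refl _, congrArg some h⟩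
  | var x => intro h; cases h
  | app a b iha ihb =>
    intro h
    cases h with
    | inl h =>
      obtain ⟨t, ht, hf⟩ := iha h
      cases ht with
      | refl => exact ⟨.app a b, .refl _, hf⟩
      | strict ht => exact ⟨t, .strict (.left ht), hf⟩
    | inr h =>
      obtain ⟨t, ht, hf⟩ := ihb h
      exact ⟨t, .strict (.right ht), hf⟩

theorem sub_vars : ∀ {s t : Tm α}, Subtm t s → t.vars ⊆ s.vars := by
  intro s
  induction s with
  | sym g =>
    intro t h
    cases h with
    | refl => exact subset_rfl
    | strict h => cases h
  | var x =>
    intro t h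
    cases h with
    | refl => exact subset_rfl
    | strict h => cases h
  | app a b iha ihb =>
    intro t h
    cases h with
    | refl => exact subset_rfl
    | strict h =>
      cases h with
      | left h => exact (iha (.strict h)).trans Set.subset_union_left
      | right h => exact (ihb h).trans Set.subset_union_right

theorem strsub_subst {γ : ℕ → Tm α} : ∀ {s t : Tm α},
    (StrSubtm t s → StrSubtm (subst γ t) (subst γ s)) ∧
    (Subtm t s → Subtm (subst γ t) (subst γ s)) := by
  have key : ∀ s t : Tm α, StrSubtm t s → StrSubtm (subst γ t) (subst γ s) := by
    intro s
    induction s with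
    | sym g => intro t h; cases h
    | var x => intro t h; cases h
    | app a b iha ihb =>
      intro t h
      cases h with
      | left h => exact .left (iha t h)
      | right h =>
        cases h with
        | refl => exact .right (.refl _)
        | strict h => exact .right (.strict (ihb t h))
  intro s t
  refine ⟨key s t, ?_⟩
  intro h
  cases h with
  | refl => exact .refl _
  | strict h => exact .strict (key s t h)

end Aux2
section Aux3
variable {α : Type} {S : Sig α}

/-- Decomposition of subterms of a substituted term. -/
theorem sub_subst_decomp {γ : ℕ → Tm α} : ∀ {r u : Tm α}, Subtm u (subst γ r) →
    (∃ x ∈ r.vars, Subtm u (γ x)) ∨ (∃ r', Subtm r' r ∧ u = subst γ r') := by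
  intro r
  induction r with
  | sym f =>
    intro u h
    cases h with
    | refl => exact Or.inr ⟨.sym f, .refl _, rfl⟩
    | strict h => cases h
  | var x => intro u h; exact Or.inl ⟨x, rfl, h⟩
  | app a b iha ihb =>
    intro u h
    cases h with
    | refl => exact Or.inr ⟨.app a b, .refl _, rfl⟩
    | strict h =>
      cases h with
      | left h =>
        rcases iha (.strict h) with ⟨x, hx, hu⟩ | ⟨r', hr', hu⟩
        · exact Or.inl ⟨x, Or.inl hx, hu⟩
        · refine Or.inr ⟨r', ?_, hu⟩
          cases hr' with
          | refl => exact absurd (hu ▸ h) strsub_irrefl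
          | strict hr' => exact .strict (.left hr')
      | right h =>
        rcases ihb h with ⟨x, hx, hu⟩ | ⟨r', hr', hu⟩
        · exact Or.inl ⟨x, Or.inr hx, hu⟩
        · exact Or.inr ⟨r', .strict (.right hr'), hu⟩

/-- In a pattern/spine, substituted variables yield subterms. -/
theorem pat_var_sub {γ : ℕ → Tm α} : ∀ {p u : Tm α} {x : ℕ},
    (Pat S p → x ∈ p.vars → Subtm u (γ x) → Subtm u (subst γ p)) ∧
    (PatSpine S p → x ∈ p.vars → Subtm u (γ x) → StrSubtm u (subst γ p)) := by
  intro p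
  induction p with
  | sym f =>
    refine fun {u x} => ⟨?_, ?_⟩
    · intro _ hx; exact absurd hx (Set.notMem_empty x)
    · intro _ hx; exact absurd hx (Set.notMem_empty x)
  | var y =>
    refine fun {u x} => ⟨?_, ?_⟩
    · intro _ hx hu; cases hx; exact hu
    · intro hsp; cases hsp
  | app a b iha ihb =>
    refine fun {u x} => ⟨?_, ?_⟩
    · intro hp hx hu
      cases hp with
      | cons hsp _ =>
        cases hsp with
        | app hsa hpb =>
          cases hx with
          | inl hx => exact .strict (.left (iha.2 hsa hx hu))
          | inr hx => exact .strict (.right (ihb.1 hpb hx hu))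
    · intro hsp hx hu
      cases hsp with
      | app hsa hpb =>
        cases hx with
        | inl hx => exact .left (iha.2 hsa hx hu)
        | inr hx => exact .right (ihb.1 hpb hx hu)

theorem lhs_var_sub {γ : ℕ → Tm α} : ∀ {l : Tm α}, LhsSpine S l → ∀ {u : Tm α} {x : ℕ},
    x ∈ l.vars → Subtm u (γ x) → StrSubtm u (subst γ l) := by
  intro l hl
  induction hl with
  | head _ => intro u x hx; exact absurd hx (Set.notMem_empty x)
  | app hs hp ih =>
    intro u x hx hu
    cases hx with
    | inl hx => exact .left (ih hx hu)
    | inr hx => exact .right (pat_var_sub.1 hp hx hu)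

end Aux3
section Aux4
variable {α : Type} {S : Sig α}

theorem ty_subst {γ : ℕ → Tm α} : ∀ {r : Tm α} {τ : Ty}, HasTy S r τ →
    (∀ x ∈ r.vars, HasTy S (γ x) (S.varTy x)) → HasTy S (subst γ r) τ := by
  intro r τ h
  induction h with
  | sym f => intro _; exact .sym f
  | var x => intro hγ; exact hγ x rfl
  | app h1 h2 ih1 ih2 =>
    intro hγ
    exact .app (ih1 fun x hx => hγ x (Or.inl hx)) (ih2 fun x hx => hγ x (Or.inr hx))

theorem pat_ty_inv {γ : ℕ → Tm α} : ∀ (p : Tm α),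
    (PatSpine S p → ∀ σ τ : Ty, HasTy S p σ → HasTy S (subst γ p) τ →
      σ = τ ∧ ∀ x ∈ p.vars, HasTy S (γ x) (S.varTy x)) ∧
    (Pat S p → ∀ σ : Ty, HasTy S p σ → HasTy S (subst γ p) σ →
      ∀ x ∈ p.vars, HasTy S (γ x) (S.varTy x)) := by
  intro p
  induction p with
  | sym f =>
    refine ⟨?_, ?_⟩
    · intro _ σ τ h1 h2
      cases h1; cases h2
      exact ⟨rfl, fun x hx => absurd hx (Set.notMem_empty x)⟩
    · intro _ σ h1 h2 x hx; exact absurd hx (Set.notMem_empty x)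
  | var y =>
    refine ⟨?_, ?_⟩
    · intro hsp; cases hsp
    · intro _ σ h1 h2 x hx
      cases h1
      cases hx
      exact h2
  | app a b iha ihb =>
    have SP : PatSpine S (.app a b) → ∀ σ τ : Ty, HasTy S (.app a b) σ →
        HasTy S (subst γ (.app a b)) τ →
        σ = τ ∧ ∀ x ∈ (Tm.app a b).vars, HasTy S (γ x) (S.varTy x) := by
      intro hsp σ τ h1 h2
      cases hsp with
      | app hsa hpb =>
        cases h1 with
        | app hta htb =>
          cases h2 with
          | app hta' htb' =>
            obtain ⟨heq, hγa⟩ := iha.1 hsa _ _ hta hta'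
            cases heq
            have hγb := ihb.2 hpb _ htb htb'
            refine ⟨rfl, fun x hx => ?_⟩
            cases hx with
            | inl hx => exact hγa x hx
            | inr hx => exact hγb x hx
    refine ⟨SP, ?_⟩
    intro hp σ h1 h2
    cases hp with
    | cons hsp _ => exact (SP hsp σ σ h1 h2).2

theorem lhs_ty_inv {γ : ℕ → Tm α} : ∀ {l : Tm α}, LhsSpine S l →
    ∀ {σ τ : Ty}, HasTy S l σ → HasTy S (subst γ l) τ →
    σ = τ ∧ ∀ x ∈ l.vars, HasTy S (γ x) (S.varTy x) := by
  intro l hl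
  induction hl with
  | head _ =>
    intro σ τ h1 h2
    cases h1; cases h2
    exact ⟨rfl, fun x hx => absurd hx (Set.notMem_empty x)⟩
  | app hs hp ih =>
    intro σ τ h1 h2
    cases h1 with
    | app hta htb =>
      cases h2 with
      | app hta' htb' =>
        obtain ⟨heq, hγa⟩ := ih hta hta'
        cases heq
        have hγb := (pat_ty_inv _).2 hp _ htb htb'
        refine ⟨rfl, fun x hx => ?_⟩
        cases hx with
        | inl hx => exact hγa x hx
        | inr hx => exact hγb x hx

theorem sub_hasTy : ∀ {s : Tm α} {σ : Ty}, HasTy S s σ → ∀ {u : Tm α}, Subtm u s →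
    ∃ τ, HasTy S u τ := by
  intro s
  induction s with
  | sym f =>
    intro σ h u hu
    cases hu with
    | refl => exact ⟨σ, h⟩
    | strict hu => cases hu
  | var x =>
    intro σ h u hu
    cases hu with
    | refl => exact ⟨σ, h⟩
    | strict hu => cases hu
  | app a b iha ihb =>
    intro σ h u hu
    cases hu with
    | refl => exact ⟨σ, h⟩
    | strict hu =>
      cases h with
      | app hta htb =>
        cases hu with
        | left hu => exact iha hta (.strict hu)
        | right hu => exact ihb htb hu

def headVar : Tm α → Option ℕ
  | .sym _ => none
  | .var x => some x
  | .app s _ => headVar s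

theorem head_total : ∀ s : Tm α, (∃ f, s.headSym = some f) ∨ (∃ x, headVar s = some x) := by
  intro s
  induction s with
  | sym f => exact Or.inl ⟨f, rfl⟩
  | var x => exact Or.inr ⟨x, rfl⟩
  | app a b iha _ => exact iha

theorem headVar_mem_vars : ∀ {s : Tm α} {x : ℕ}, headVar s = some x → x ∈ s.vars := by
  intro s
  induction s with
  | sym f => intro x h; cases h
  | var y => intro x h; cases h; rfl
  | app a b iha _ => intro x h; exact Or.inl (iha h)

theorem headVar_subst_headSym {γ : ℕ → Tm α} : ∀ {s : Tm α} {x : ℕ}, headVar s = some x →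
    (subst γ s).headSym = (γ x).headSym := by
  intro s
  induction s with
  | sym f => intro x h; cases h
  | var y => intro x h; cases h; rfl
  | app a b iha _ => intro x h; exact iha h

theorem varHead_ty {γ : ℕ → Tm α} {x : ℕ} {i : ℕ} : ∀ {a : Tm α},
    headVar a = some x → HasTy S (γ x) (.base i) → ∀ {τ : Ty},
    HasTy S (subst γ a) τ → τ = .base i := by
  intro a
  induction a with
  | sym f => intro h; cases h
  | var y =>
    intro h hγ τ ht
    cases h
    exact hasTy_unique ht hγ
  | app s t ihs _ =>
    intro h hγ τ ht
    cases ht with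
    | app h1 h2 => exact absurd (ihs h hγ h1) (by intro h'; cases h')

end Aux4
section Aux5
variable {α : Type} {S : Sig α}

theorem data_base {s : Tm α} (h : IsData S s) : ∃ i, HasTy S s (.base i) := by
  obtain ⟨hp, hg⟩ := h
  cases hp with
  | var x => exact absurd hg not_false
  | cons _ hty => exact hty

theorem ground_sub : ∀ {s t : Tm α}, Subtm t s → s.ground → t.ground := by
  intro s
  induction s with
  | sym f =>
    intro t h hg
    cases h with
    | refl => exact hg
    | strict h => cases h
  | var x =>
    intro t h hg
    cases h with
    | refl => exact hg
    | strict h => cases h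
  | app a b iha ihb =>
    intro t h hg
    cases h with
    | refl => exact hg
    | strict h =>
      cases h with
      | left h => exact iha (.strict h) hg.1
      | right h => exact ihb h hg.2

theorem data_sub_aux : ∀ t : Tm α, t.ground →
    (Pat S t → ∀ u, StrSubtm u t → IsData S u) ∧
    (PatSpine S t → ∀ u, StrSubtm u t → IsData S u) := by
  intro t
  induction t with
  | sym f => exact fun _ => ⟨fun _ u h => (nomatch h), fun _ u h => nomatch h⟩
  | var x => intro hg; exact absurd hg not_false
  | app a b iha ihb =>
    intro hg
    have SP : PatSpine S (.app a b) → ∀ u, StrSubtm u (.app a b) → IsData S u := by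
      intro hsp u h
      cases hsp with
      | app hsa hpb =>
        cases h with
        | left h => exact (iha hg.1).2 hsa u h
        | right h =>
          cases h with
          | refl => exact ⟨hpb, hg.2⟩
          | strict h => exact (ihb hg.2).1 hpb u h
    refine ⟨?_, SP⟩
    intro hp u h
    cases hp with
    | cons hsp _ => exact SP hsp u h

theorem data_sub {s t : Tm α} (h : IsData S t) (hu : Subtm s t) : IsData S s := by
  cases hu with
  | refl => exact h
  | strict hu => exact (data_sub_aux t h.2).1 h.1 s hu

theorem data_allCons : ∀ {t : Tm α}, t.ground →
    (Pat S t → ∀ f, Tm.hasSym f t → S.Cons f) ∧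
    (PatSpine S t → ∀ f, Tm.hasSym f t → S.Cons f) := by
  intro t
  induction t with
  | sym g =>
    refine fun _ => ⟨?_, ?_⟩
    · intro hp f hf
      cases hp with
      | cons hsp _ => cases hsp with | head hc => exact hf ▸ hc
    · intro hsp f hf
      cases hsp with | head hc => exact hf ▸ hc
  | var x => intro hg; exact absurd hg not_false
  | app a b iha ihb =>
    intro hg
    have SP : PatSpine S (.app a b) → ∀ f, Tm.hasSym f (.app a b) → S.Cons f := by
      intro hsp f hf
      cases hsp with
      | app hsa hpb =>
        cases hf with
        | inl hf => exact (iha hg.1).2 hsa f hf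
        | inr hf => exact (ihb hg.2).1 hpb f hf
    refine ⟨?_, SP⟩
    intro hp f hf
    cases hp with
    | cons hsp _ => exact SP hsp f hf

theorem data_yfree_aux : ∀ t : Tm α, t.ground →
    (Pat S t → YFree S t) ∧
    (∀ σ : Ty, PatSpine S t → HasTy S t σ → σ.order ≤ 1 → YFree S t) := by
  intro t
  induction t with
  | sym f =>
    intro _
    have SP : ∀ σ : Ty, PatSpine S (.sym f) → HasTy S (.sym f) σ → σ.order ≤ 1 →
        YFree S (.sym f) := by
      intro σ _ hty hord g hg hY
      cases hty
      cases hg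
      have := hY.2
      omega
    refine ⟨?_, SP⟩
    intro hp
    cases hp with
    | cons hsp hty =>
      obtain ⟨i, hty⟩ := hty
      exact SP _ hsp hty (by simp [Ty.order])
  | var x => intro hg; exact absurd hg not_false
  | app a b iha ihb =>
    intro hg
    have SP : ∀ σ : Ty, PatSpine S (.app a b) → HasTy S (.app a b) σ → σ.order ≤ 1 →
        YFree S (.app a b) := by
      intro σ hsp hty hord
      cases hsp with
      | app hsa hpb =>
        cases hty with
        | @app _ _ σ' _ hta htb =>
          obtain ⟨j, htj⟩ := data_base (S := S) ⟨hpb, hg.2⟩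
          have hσ' : σ' = .base j := hasTy_unique htb htj
          have horda : (Ty.arrow σ' σ).order ≤ 1 := by
            subst hσ'
            simp [Ty.order]
            omega
          have hYa := iha hg.1 |>.2 _ hsa hta horda
          have hYb := ihb hg.2 |>.1 hpb
          intro g hg' hY
          cases hg' with
          | inl h => exact hYa g h hY
          | inr h => exact hYb g h hY
    refine ⟨?_, SP⟩
    intro hp
    cases hp with
    | cons hsp hty =>
      obtain ⟨i, hty⟩ := hty
      exact SP _ hsp hty (by simp [Ty.order])

theorem data_yfree {s : Tm α} (h : IsData S s) : YFree S s :=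
  (data_yfree_aux s h.2).1 h.1

theorem bsafe_yfree {R : Set (Rule α)} {B : Set (Tm α)} (hB : GoodB S R B) :
    ∀ s : Tm α, s.ground → BSafe S B s → YFree S s := by
  intro s
  induction s with
  | sym f =>
    intro _ hsafe g hg hY
    have hch : ConsHead S (.sym f) := ⟨f, rfl, hg ▸ hY.1⟩
    have := data_yfree (hB.1 _ (hsafe _ (.refl _) hch))
    exact this g hg hY
  | var x => intro hg; exact absurd hg not_false
  | app a b iha ihb =>
    intro hg hsafe
    by_cases hch : ConsHead S (.app a b)
    · exact data_yfree (hB.1 _ (hsafe _ (.refl _) hch))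
    · have hYb := ihb hg.2 (fun u hu huc => hsafe u (.strict (.right hu)) huc)
      have hsafea : BSafe S B a := by
        intro u hu huc
        cases hu with
        | refl => exact absurd huc hch
        | strict hu => exact hsafe u (.strict (.left hu)) huc
      have hYa := iha hg.1 hsafea
      intro g hg' hY
      cases hg' with
      | inl h => exact hYa g h hY
      | inr h => exact hYb g h hY

end Aux5
section Aux6
variable {α : Type} {S : Sig α}

theorem lhsSpine_headSym : ∀ {l : Tm α}, LhsSpine S l →
    ∃ f, l.headSym = some f ∧ ¬ S.Cons f := by
  intro l hl
  induction hl with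
  | head hf => exact ⟨_, rfl, hf⟩
  | app _ _ ih => exact ih

theorem rew_defSym {R : Set (Rule α)} (hR : ∀ ρ ∈ R, GoodRule S ρ) :
    ∀ {s t : Tm α}, Rew R s t → ∃ f, ¬ S.Cons f ∧ Tm.hasSym f s := by
  intro s t h
  induction h with
  | @root ρ γ hρ =>
    obtain ⟨f, hf, hnc⟩ := lhsSpine_headSym ((hR ρ hρ).1)
    exact ⟨f, hnc, headSym_hasSym (headSym_subst hf)⟩
  | appL _ ih => obtain ⟨f, h1, h2⟩ := ih; exact ⟨f, h1, Or.inl h2⟩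
  | appR _ ih => obtain ⟨f, h1, h2⟩ := ih; exact ⟨f, h1, Or.inr h2⟩

theorem step_lemma {R : Set (Rule α)} {B : Set (Tm α)}
    (hR : ∀ ρ ∈ R, GoodRule S ρ) (hB : GoodB S R B) :
    ∀ {s t : Tm α}, Rew R s t → ∀ {σ : Ty}, s.ground → BSafe S B s → HasTy S s σ →
    t.ground ∧ BSafe S B t ∧ HasTy S t σ ∧ Rew (Rprime S R) s t := by
  intro s t h
  induction h with
  | @root ρ γ hρ =>
    intro σ hg hsafe hty
    obtain ⟨hl, hlin, hvsub, ⟨τ0, hlty, hrty⟩, hcf⟩ := hR ρ hρ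
    obtain ⟨heq, hγty⟩ := lhs_ty_inv hl hlty hty
    cases heq
    have hγg : ∀ x ∈ ρ.lhs.vars, (γ x).ground := subst_ground hg
    -- ground
    have hgt : (subst γ ρ.rhs).ground := ground_subst_of fun x hx => hγg x (hvsub hx)
    -- typing
    have htyt : HasTy S (subst γ ρ.rhs) σ := ty_subst hrty fun x hx => hγty x (hvsub hx)
    -- B-safety
    have hsafet : BSafe S B (subst γ ρ.rhs) := by
      intro u hu hch
      rcases sub_subst_decomp hu with ⟨x, hx, hux⟩ | ⟨r', hr', rfl⟩
      · exact hsafe u (.strict (lhs_var_sub hl (hvsub hx) hux)) hch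
      · rcases head_total r' with ⟨f, hf⟩ | ⟨x, hx⟩
        · -- symbol-headed subterm of the rhs
          have hchr : ConsHead S r' := by
            obtain ⟨g, hg', hcg⟩ := hch
            have : some f = some g := (headSym_subst (γ := γ) hf).symm.trans hg'
            cases this
            exact ⟨f, hf, hcg⟩
          rcases hcf r' hr' hchr with hd | hstr
          · rw [ground_subst hd.2]
            exact hB.2.2 ρ hρ r' hr' hd
          · exact hsafe _ (.strict (strsub_subst.1 hstr)) hch
        · -- variable-headed subterm of the rhs
          have hxl : x ∈ ρ.lhs.vars := hvsub (sub_vars hr' (headVar_mem_vars hx))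
          have hγxB : γ x ∈ B := by
            refine hsafe _ (.strict (lhs_var_sub hl hxl (.refl _))) ?_
            obtain ⟨g, hg', hcg⟩ := hch
            exact ⟨g, ((headVar_subst_headSym hx).symm.trans hg'), hcg⟩
          obtain ⟨i, hγxty⟩ := data_base (hB.1 _ hγxB)
          cases r' with
          | sym f => cases hx
          | var y => cases hx; exact hγxB
          | app a b =>
            exfalso
            obtain ⟨τu, hτu⟩ := sub_hasTy htyt hu
            cases hτu with
            | app h1 h2 =>
              have := varHead_ty (a := a) hx hγxty h1
              cases this
    -- the rule lies in R'
    have hYs : YFree S (subst γ ρ.lhs) := bsafe_yfree hB _ hg hsafe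
    have hYl : YFree S ρ.lhs := fun f hf => hYs f (hasSym_subst hf)
    have hYr : YFree S ρ.rhs := by
      intro c hc hY
      obtain ⟨t', ht', hhd⟩ := hasSym_head_sub hc
      have hcht' : ConsHead S t' := ⟨c, hhd, hY.1⟩
      rcases hcf t' ht' hcht' with hd | hstr
      · exact data_yfree hd c (headSym_hasSym hhd) hY
      · exact hYl c (hasSym_sub_mono (.strict hstr) (headSym_hasSym hhd)) hY
    exact ⟨hgt, hsafet, htyt, .root ⟨hρ, hYl, hYr⟩⟩
  | @appL a a' b hrw ih =>
    intro σ hg hsafe hty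
    cases hty with
    | @app _ _ σb _ hta htb =>
      have hnch : ¬ ConsHead S (.app a b) := by
        intro hch
        have hd := hB.1 _ (hsafe _ (.refl _) hch)
        obtain ⟨f, hnc, hf⟩ := rew_defSym hR hrw
        exact hnc ((data_allCons hd.2).1 hd.1 f (Or.inl hf))
      have hsafea : BSafe S B a := by
        intro u hu huc
        cases hu with
        | refl => exact absurd huc hnch
        | strict hu => exact hsafe u (.strict (.left hu)) huc
      obtain ⟨hg', hsafe', hty', hrw'⟩ := ih hg.1 hsafea hta
      refine ⟨⟨hg', hg.2⟩, ?_, .app hty' htb, .appL hrw'⟩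
      intro u hu huc
      cases hu with
      | refl =>
        exfalso
        have ha'B := hsafe' _ (.refl _) huc
        obtain ⟨i, hi⟩ := data_base (hB.1 _ ha'B)
        cases hasTy_unique hty' hi
      | strict hu =>
        cases hu with
        | left hu => exact hsafe' u (.strict hu) huc
        | right hu => exact hsafe u (.strict (.right hu)) huc
  | @appR a b b' hrw ih =>
    intro σ hg hsafe hty
    cases hty with
    | @app _ _ σb _ hta htb =>
      have hnch : ¬ ConsHead S (.app a b) := by
        intro hch
        have hd := hB.1 _ (hsafe _ (.refl _) hch)
        obtain ⟨f, hnc, hf⟩ := rew_defSym hR hrw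
        exact hnc ((data_allCons hd.2).1 hd.1 f (Or.inr hf))
      have hsafeb : BSafe S B b := fun u hu huc => hsafe u (.strict (.right hu)) huc
      obtain ⟨hg', hsafe', hty', hrw'⟩ := ih hg.2 hsafeb htb
      refine ⟨⟨hg.1, hg'⟩, ?_, .app hta hty', .appR hrw'⟩
      intro u hu huc
      cases hu with
      | refl => exact absurd huc hnch
      | strict hu =>
        cases hu with
        | left hu => exact hsafe u (.strict (.left hu)) huc
        | right hu => exact hsafe' u hu huc
  
end Aux6
section Aux7
variable {α : Type} {S : Sig α}

theorem goodB_Bset {R : Set (Rule α)} {s0 : Tm α} : GoodB S R (Bset S R s0) := by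
  refine ⟨fun t ht => ht.1, ?_, fun ρ hρ t ht hd => ⟨hd, Or.inr ⟨ρ, hρ, ht⟩⟩⟩
  intro t ht u hu
  refine ⟨data_sub ht.1 hu, ?_⟩
  rcases ht.2 with h | ⟨ρ, hρ, h⟩
  · exact Or.inl (sub_trans hu h)
  · exact Or.inr ⟨ρ, hρ, sub_trans hu h⟩

theorem basicSpine_ground : ∀ {s : Tm α}, BasicSpine S s → s.ground := by
  intro s h
  induction h with
  | head _ => trivial
  | app _ hd ih => exact ⟨ih, hd.2⟩

theorem basicSpine_str_data : ∀ {s : Tm α}, BasicSpine S s →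
    ∀ u, StrSubtm u s → IsData S u := by
  intro s h
  induction h with
  | head _ => intro u hu; cases hu
  | app _ hd ih =>
    intro u hu
    cases hu with
    | left hu => exact ih u hu
    | right hu => exact data_sub hd hu

theorem basicSpine_headSym : ∀ {s : Tm α}, BasicSpine S s →
    ∃ f, s.headSym = some f ∧ ¬ S.Cons f := by
  intro s h
  induction h with
  | head hf => exact ⟨_, rfl, hf⟩
  | app _ _ ih => exact ih

theorem bsafe_Bset {R : Set (Rule α)} {s0 : Tm α} (hb : Basic S s0) :
    BSafe S (Bset S R s0) s0 := by
  intro u hu hch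
  cases hu with
  | refl =>
    obtain ⟨f, hf, hnc⟩ := basicSpine_headSym hb.1
    obtain ⟨g, hg, hcg⟩ := hch
    cases hf.symm.trans hg
    exact absurd hcg hnc
  | strict hu => exact ⟨basicSpine_str_data hb.1 u hu, Or.inl (.strict hu)⟩

theorem multi_lemma {R : Set (Rule α)} {B : Set (Tm α)}
    (hR : ∀ ρ ∈ R, GoodRule S ρ) (hB : GoodB S R B) {σ : Ty} :
    ∀ {s t : Tm α}, Relation.ReflTransGen (Rew R) s t → s.ground → BSafe S B s →
    HasTy S s σ →
    t.ground ∧ BSafe S B t ∧ HasTy S t σ ∧ Relation.ReflTransGen (Rew (Rprime S R)) s t := by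
  intro s t h
  induction h with
  | refl => intro hg hs hty; exact ⟨hg, hs, hty, .refl⟩
  | tail h1 h2 ih =>
    intro hg hs hty
    obtain ⟨g1, s1, t1, r1⟩ := ih hg hs hty
    obtain ⟨g2, s2, t2, r2⟩ := step_lemma hR hB h2 g1 s1 t1
    exact ⟨g2, s2, t2, r1.tail r2⟩

end Aux7
/-- Constructors with higher-order argument types can be eliminated:
(a) data terms and (ground) `B`-safe terms lie in `T(F', ∅)`;
(b) reductions from basic terms stay in `T(F', ∅)` and use only rules of `R'`. -/
theorem higher_order_constructors_eliminable {α : Type} (S : Sig α)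
    (R : Set (Rule α)) (hR : ∀ ρ ∈ R, GoodRule S ρ) :
    ((∀ s : Tm α, IsData S s → s.ground ∧ YFree S s) ∧
     (∀ B, GoodB S R B → ∀ s : Tm α, s.ground → BSafe S B s → YFree S s)) ∧
    (∀ s t : Tm α, Basic S s → Relation.ReflTransGen (Rew R) s t →
      (t.ground ∧ YFree S t) ∧ Relation.ReflTransGen (Rew (Rprime S R)) s t) := by
  refine ⟨⟨fun s hd => ⟨hd.2, data_yfree hd⟩, fun B hB s hg hs => bsafe_yfree hB s hg hs⟩, ?_⟩
  intro s t hb hst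
  have hGB : GoodB S R (Bset S R s) := goodB_Bset
  have hg := basicSpine_ground hb.1
  have hsafe := bsafe_Bset (R := R) hb
  obtain ⟨i, hty⟩ := hb.2
  obtain ⟨g, sf, _, r⟩ := multi_lemma hR hGB hst hg hsafe hty
  exact ⟨⟨g, bsafe_yfree hGB t g sf⟩, r⟩
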